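/- For 0 < p < 1, the randomized complete graph state ρ^p_{K_n} = Σ_{F spans K_n} p^{|E_F|}(1-p)^{|E_{K_n}|-|E_F|} |F⟩⟨F| has rank exactly 2^n − n, which is the maximal rank among all n-qubit randomized graph states. -/

import Mathlib

open scoped BigOperators

/-- The graph state amplitude function for edge set `E` on `n` qubits:
`|G⟩ = ∏ CZ |+⟩^⊗n`, whose amplitude on a computational basis state `x` is
`2^(-n/2)` times `(-1)` for every edge both of whose endpoints are in state `1`. -/
noncomputable def gs (n : ℕ) (E : Finset (Sym2 (Fin n))) : (Fin n → Fin 2) → ℂ :=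
  fun x => ((Real.sqrt 2)⁻¹ : ℝ) ^ n *
    ∏ e ∈ E, (if ∀ i ∈ e, x i = 1 then (-1 : ℂ) else 1)

/-- Inner product `⟨v|w⟩` on the `n`-qubit state space. -/
noncomputable def ip {n : ℕ} (v w : (Fin n → Fin 2) → ℂ) : ℂ :=
  ∑ x, (starRingEnd ℂ) (v x) * w x

/-- The edge set of the complete graph on `n` labeled vertices. -/
def completeEdges (n : ℕ) : Finset (Sym2 (Fin n)) :=
  Finset.univ.filter fun e => ¬ e.IsDiag

namespace RGS

/-- The monomial/indicator function of a vertex subset. -/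
noncomputable def chi (n : ℕ) (S : Finset (Fin n)) : (Fin n → Fin 2) → ℂ :=
  fun x => if ∀ i ∈ S, x i = 1 then 1 else 0

/-- The endpoints of an edge, as a finset. -/
def verts {n : ℕ} (e : Sym2 (Fin n)) : Finset (Fin n) :=
  Finset.univ.filter (· ∈ e)

lemma mem_verts {n : ℕ} {e : Sym2 (Fin n)} {i : Fin n} : i ∈ verts e ↔ i ∈ e := by
  simp [verts]

/-- The set of all graph-state vectors coming from subgraphs of the complete graph. -/
def SG (n : ℕ) : Set ((Fin n → Fin 2) → ℂ) := gs n '' {F | F ⊆ completeEdges n}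

/-- The set of monomials indexed by vertex sets of size ≠ 1. -/
def Schi (n : ℕ) : Set ((Fin n → Fin 2) → ℂ) := chi n '' {S | S.card ≠ 1}

lemma sup_cond {n : ℕ} (A : Finset (Sym2 (Fin n))) (x : Fin n → Fin 2) :
    (∀ i ∈ A.sup verts, x i = 1) ↔ ∀ e ∈ A, ∀ i ∈ e, x i = 1 := by
  constructor
  · intro h e he i hie
    exact h i (Finset.mem_sup.mpr ⟨e, he, mem_verts.mpr hie⟩)
  · intro h i hi
    obtain ⟨e, he, hie⟩ := Finset.mem_sup.mp hi
    exact h e he i (mem_verts.mp hie)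

lemma expand (n : ℕ) (F : Finset (Sym2 (Fin n))) (x : Fin n → Fin 2) :
    ∏ e ∈ F, (if ∀ i ∈ e, x i = 1 then (-1 : ℂ) else 1)
      = ∑ A ∈ F.powerset, (-2 : ℂ) ^ A.card * chi n (A.sup verts) x := by
  classical
  have h1 : ∀ e ∈ F,
      (if ∀ i ∈ e, x i = 1 then (-1 : ℂ) else 1)
        = (-2 : ℂ) * (if ∀ i ∈ e, x i = 1 then (1 : ℂ) else 0) + 1 := by
    intro e _; split_ifs <;> ring
  rw [Finset.prod_congr rfl h1, Finset.prod_add]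
  refine Finset.sum_congr rfl fun A hA => ?_
  rw [Finset.prod_const_one, mul_one, Finset.prod_mul_distrib, Finset.prod_const,
    Finset.prod_boole]
  unfold chi
  split_ifs with h1 h2 h3
  · rfl
  · exact absurd ((sup_cond A x).mpr h1) h2
  · exact absurd ((sup_cond A x).mp h3) h1
  · rfl

lemma card_sup_verts_ne_one {n : ℕ} {A : Finset (Sym2 (Fin n))}
    (hA : A ⊆ completeEdges n) : (A.sup verts).card ≠ 1 := by
  classical
  rcases A.eq_empty_or_nonempty with rfl | ⟨e, he⟩
  · simp
  · have hdiag : ¬ e.IsDiag := by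
      have := hA he
      simp [completeEdges] at this
      exact this
    induction e using Sym2.ind with
    | _ a b =>
      have hab : a ≠ b := by
        simpa [Sym2.mk_isDiag_iff] using hdiag
      have hsub : verts s(a, b) ⊆ A.sup verts := Finset.le_sup he
      have ha : a ∈ A.sup verts := hsub (mem_verts.mpr (Sym2.mem_mk_left a b))
      have hb : b ∈ A.sup verts := hsub (mem_verts.mpr (Sym2.mem_mk_right a b))
      have : 1 < (A.sup verts).card := Finset.one_lt_card.mpr ⟨a, ha, b, hb, hab⟩
      omega

lemma gs_mem_span_chi {n : ℕ} {F : Finset (Sym2 (Fin n))} (hF : F ⊆ completeEdges n) :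
    gs n F ∈ Submodule.span ℂ (Schi n) := by
  classical
  have hfun : gs n F = ∑ A ∈ F.powerset,
      (((((Real.sqrt 2)⁻¹ : ℝ) : ℂ)) ^ n * (-2 : ℂ) ^ A.card) • chi n (A.sup verts) := by
    funext x
    simp only [Finset.sum_apply, Pi.smul_apply, smul_eq_mul]
    rw [show gs n F x = (((Real.sqrt 2)⁻¹ : ℝ) : ℂ) ^ n *
      ∏ e ∈ F, (if ∀ i ∈ e, x i = 1 then (-1 : ℂ) else 1) from rfl, expand, Finset.mul_sum]
    exact Finset.sum_congr rfl fun A _ => by ring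
  rw [hfun]
  exact Submodule.sum_mem _ fun A hA => Submodule.smul_mem _ _
    (Submodule.subset_span
      ⟨A.sup verts, card_sup_verts_ne_one ((Finset.mem_powerset.mp hA).trans hF), rfl⟩)

lemma sqrt2_cancel (n : ℕ) :
    ((Real.sqrt 2 : ℝ) : ℂ) ^ n * ((((Real.sqrt 2)⁻¹ : ℝ) : ℂ)) ^ n = 1 := by
  rw [← mul_pow, ← Complex.ofReal_mul,
    mul_inv_cancel₀ (ne_of_gt (Real.sqrt_pos.mpr (by norm_num)))]
  simp

lemma chi_mem_span_gs {n : ℕ} {S : Finset (Fin n)} (hS : S.card ≠ 1) :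
    chi n S ∈ Submodule.span ℂ (SG n) := by
  classical
  rcases Nat.lt_or_ge S.card 2 with h2 | h2
  · -- S = ∅
    have hS0 : S = ∅ := Finset.card_eq_zero.mp (by omega)
    subst hS0
    have hfun : chi n (∅ : Finset (Fin n)) = (((Real.sqrt 2 : ℝ) : ℂ) ^ n) • gs n ∅ := by
      funext x
      simp only [chi, Finset.notMem_empty, false_implies, implies_true, if_true,
        Pi.smul_apply, smul_eq_mul, gs, Finset.prod_empty, mul_one]
      rw [sqrt2_cancel]
    rw [hfun]
    exact Submodule.smul_mem _ _ (Submodule.subset_span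
      (show gs n ∅ ∈ gs n '' {F | F ⊆ completeEdges n} from ⟨∅, by simp, rfl⟩))
  · obtain ⟨i, hi⟩ : S.Nonempty := Finset.card_pos.mp (by omega)
    set A : Finset (Sym2 (Fin n)) := (S.erase i).image (fun j => s(i, j)) with hA
    have hAc : A ⊆ completeEdges n := by
      intro e he
      simp only [hA, Finset.mem_image] at he
      obtain ⟨j, hj, rfl⟩ := he
      simp only [completeEdges, Finset.mem_filter, Finset.mem_univ, true_and,
        Sym2.mk_isDiag_iff]
      exact fun h => (Finset.mem_erase.mp hj).1 h.symm
    have hcover : ∀ x : Fin n → Fin 2,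
        (∀ e ∈ A, ∀ k ∈ e, x k = 1) ↔ ∀ k ∈ S, x k = 1 := by
      intro x
      constructor
      · intro h k hk
        obtain ⟨j0, hj0⟩ : (S.erase i).Nonempty := by
          rw [← Finset.card_pos, Finset.card_erase_of_mem hi]; omega
        have hmem : ∀ j ∈ S.erase i, ∀ k ∈ s(i, j), x k = 1 := fun j hj =>
          h _ (Finset.mem_image_of_mem _ hj)
        rcases eq_or_ne k i with rfl | hne
        · exact hmem j0 hj0 k (Sym2.mem_mk_left k j0)
        · exact hmem k (Finset.mem_erase.mpr ⟨hne, hk⟩) k (Sym2.mem_mk_right i k)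
      · intro h e he
        simp only [hA, Finset.mem_image] at he
        obtain ⟨j, hj, rfl⟩ := he
        intro k hk
        rcases Sym2.mem_iff.mp hk with rfl | rfl
        · exact h k hi
        · exact h k (Finset.mem_of_mem_erase hj)
    have key : chi n S = ∑ B ∈ A.powerset,
        ((-1 : ℂ) ^ B.card * (2 : ℂ)⁻¹ ^ A.card * ((Real.sqrt 2 : ℝ) : ℂ) ^ n) • gs n B := by
      funext x
      have hexp : ∑ B ∈ A.powerset, (-1 : ℂ) ^ B.card *
          ∏ e ∈ B, (if ∀ k ∈ e, x k = 1 then (-1 : ℂ) else 1)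
          = (2 : ℂ) ^ A.card * chi n S x := by
        calc ∑ B ∈ A.powerset, (-1 : ℂ) ^ B.card *
              ∏ e ∈ B, (if ∀ k ∈ e, x k = 1 then (-1 : ℂ) else 1)
            = ∑ B ∈ A.powerset,
              (∏ e ∈ B, -(if ∀ k ∈ e, x k = 1 then (-1 : ℂ) else 1)) * ∏ _e ∈ A \ B, (1 : ℂ) := by
              refine Finset.sum_congr rfl fun B _ => ?_
              rw [Finset.prod_const_one, mul_one, ← Finset.prod_const (-1 : ℂ),
                ← Finset.prod_mul_distrib]
              exact Finset.prod_congr rfl fun e _ => by ring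
          _ = ∏ e ∈ A, (-(if ∀ k ∈ e, x k = 1 then (-1 : ℂ) else 1) + 1) :=
              (Finset.prod_add _ _ A).symm
          _ = ∏ e ∈ A, (2 : ℂ) * (if ∀ k ∈ e, x k = 1 then (1 : ℂ) else 0) := by
              refine Finset.prod_congr rfl fun e _ => ?_
              split_ifs <;> ring
          _ = (2 : ℂ) ^ A.card * ∏ e ∈ A, (if ∀ k ∈ e, x k = 1 then (1 : ℂ) else 0) := by
              rw [Finset.prod_mul_distrib, Finset.prod_const]
          _ = (2 : ℂ) ^ A.card * chi n S x := by
              rw [Finset.prod_boole]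
              unfold chi
              congr 1
              split_ifs with h1 h2 h3
              · rfl
              · exact absurd ((hcover x).mp h1) h2
              · exact absurd ((hcover x).mpr h3) h1
              · rfl
      simp only [Finset.sum_apply, Pi.smul_apply, smul_eq_mul]
      have hgs : ∀ B : Finset (Sym2 (Fin n)), gs n B x = (((Real.sqrt 2)⁻¹ : ℝ) : ℂ) ^ n *
          ∏ e ∈ B, (if ∀ k ∈ e, x k = 1 then (-1 : ℂ) else 1) := fun B => rfl
      calc chi n S x
          = ((2 : ℂ)⁻¹ ^ A.card * (((Real.sqrt 2 : ℝ) : ℂ) ^ n * (((Real.sqrt 2)⁻¹ : ℝ) : ℂ) ^ n)) *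
            ((2 : ℂ) ^ A.card * chi n S x) := by
            rw [sqrt2_cancel, mul_one, ← mul_assoc, ← mul_pow, inv_mul_cancel₀ (by norm_num : (2:ℂ) ≠ 0)]
            simp
        _ = ((2 : ℂ)⁻¹ ^ A.card * (((Real.sqrt 2 : ℝ) : ℂ) ^ n * (((Real.sqrt 2)⁻¹ : ℝ) : ℂ) ^ n)) *
            ∑ B ∈ A.powerset, (-1 : ℂ) ^ B.card *
              ∏ e ∈ B, (if ∀ k ∈ e, x k = 1 then (-1 : ℂ) else 1) := by rw [hexp]
        _ = ∑ B ∈ A.powerset,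
            ((-1 : ℂ) ^ B.card * (2 : ℂ)⁻¹ ^ A.card * ((Real.sqrt 2 : ℝ) : ℂ) ^ n) * gs n B x := by
            rw [Finset.mul_sum]
            refine Finset.sum_congr rfl fun B _ => ?_
            rw [hgs B]; ring
    rw [key]
    exact Submodule.sum_mem _ fun B hB => Submodule.smul_mem _ _
      (Submodule.subset_span ⟨B, (Finset.mem_powerset.mp hB).trans hAc, rfl⟩)

lemma span_eq (n : ℕ) : Submodule.span ℂ (SG n) = Submodule.span ℂ (Schi n) := by
  apply le_antisymm
  · rw [Submodule.span_le]
    rintro f ⟨F, hF, rfl⟩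
    exact gs_mem_span_chi hF
  · rw [Submodule.span_le]
    rintro f ⟨S, hS, rfl⟩
    exact chi_mem_span_gs hS

lemma chi_li (n : ℕ) : LinearIndependent ℂ (chi n) := by
  classical
  rw [Fintype.linearIndependent_iff]
  intro g hg
  have key : ∀ T : Finset (Fin n), ∑ S ∈ T.powerset, g S = 0 := by
    intro T
    have hx := congrFun hg (fun i => if i ∈ T then 1 else 0)
    simp only [Finset.sum_apply, Pi.smul_apply, smul_eq_mul, Pi.zero_apply, chi] at hx
    have hcond : ∀ S : Finset (Fin n),
        (∀ i ∈ S, (if i ∈ T then (1 : Fin 2) else 0) = 1) ↔ S ⊆ T := by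
      intro S
      constructor
      · intro h i hiS
        by_contra hiT
        have := h i hiS
        simp [hiT] at this
      · intro h i hiS
        simp [h hiS]
    have hterm : ∀ S : Finset (Fin n),
        g S * (if ∀ i ∈ S, (if i ∈ T then (1 : Fin 2) else 0) = 1 then (1 : ℂ) else 0)
          = if S ⊆ T then g S else 0 := by
      intro S
      split_ifs with h1 h2 h3
      · exact mul_one _
      · exact absurd ((hcond S).mp h1) h2
      · exact absurd ((hcond S).mpr h3) h1
      · exact mul_zero _
    rw [Finset.sum_congr rfl (fun S _ => hterm S)] at hx
    rw [show T.powerset = Finset.univ.filter (fun S => S ⊆ T) by ext S; simp,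
      Finset.sum_filter]
    exact hx
  intro S
  induction S using Finset.strongInduction with
  | _ S ih =>
    have h := key S
    rwa [Finset.sum_eq_single_of_mem S (Finset.mem_powerset_self S)
      (fun T hT hTS => ih T (lt_of_le_of_ne (Finset.mem_powerset.mp hT) hTS))] at h

lemma card_filter_ne_one (n : ℕ) :
    (Finset.univ.filter fun S : Finset (Fin n) => S.card ≠ 1).card = 2 ^ n - n := by
  classical
  have h1 : (Finset.univ.filter fun S : Finset (Fin n) => S.card = 1).card = n := by
    have himg : (Finset.univ.filter fun S : Finset (Fin n) => S.card = 1)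
        = Finset.univ.image (fun i : Fin n => ({i} : Finset (Fin n))) := by
      ext S
      simp [Finset.card_eq_one, eq_comm]
    rw [himg, Finset.card_image_of_injective _ (fun a b h => by simpa using h)]
    simp
  have h2 : (Finset.univ.filter fun S : Finset (Fin n) => S.card = 1).card
      + (Finset.univ.filter fun S : Finset (Fin n) => S.card ≠ 1).card
      = 2 ^ n := by
    have h3 := Finset.card_filter_add_card_filter_not
      (s := (Finset.univ : Finset (Finset (Fin n)))) (p := fun S => S.card = 1)
    simpa [Finset.card_univ, Fintype.card_finset] using h3
  omega

lemma dim_span_chi (n : ℕ) :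
    Module.finrank ℂ (Submodule.span ℂ (Schi n)) = 2 ^ n - n := by
  classical
  have hli : LinearIndependent ℂ
      (fun S : {S : Finset (Fin n) // S.card ≠ 1} => chi n S.1) :=
    (chi_li n).comp Subtype.val Subtype.val_injective
  have hset : Schi n = Set.range (fun S : {S : Finset (Fin n) // S.card ≠ 1} => chi n S.1) := by
    rw [Schi, Set.image_eq_range]
    rfl
  rw [hset, finrank_span_eq_card hli, Fintype.card_subtype, card_filter_ne_one]

lemma gs_conj (n : ℕ) (F : Finset (Sym2 (Fin n))) (x : Fin n → Fin 2) :
    (starRingEnd ℂ) (gs n F x) = gs n F x := by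
  simp only [gs, map_mul, map_pow, map_prod, Complex.conj_ofReal, apply_ite, map_neg, map_one]

end RGS

/-- for 0 < p < 1, the randomized complete graph state has rank
2^n - n, and this is maximal among all n-qubit randomized graph states. -/
theorem rank_randomized_complete_graph_state (n : ℕ) (p : ℝ) (hp0 : 0 < p) (hp1 : p < 1)
    (ρK : ((Fin n → Fin 2) → ℂ) →ₗ[ℂ] ((Fin n → Fin 2) → ℂ))
    (hρK : ∀ w, ρK w = ∑ F ∈ (completeEdges n).powerset,
      (((p ^ F.card * (1 - p) ^ ((completeEdges n).card - F.card) : ℝ) : ℂ) *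
        ∑ x, (starRingEnd ℂ) (gs n F x) * w x) • gs n F) :
    Module.finrank ℂ (LinearMap.range ρK) = 2 ^ n - n ∧
    ∀ (E : Finset (Sym2 (Fin n))), E ⊆ completeEdges n →
      ∀ (ρG : ((Fin n → Fin 2) → ℂ) →ₗ[ℂ] ((Fin n → Fin 2) → ℂ)),
        (∀ w, ρG w = ∑ F ∈ E.powerset,
          (((p ^ F.card * (1 - p) ^ (E.card - F.card) : ℝ) : ℂ) *
            ∑ x, (starRingEnd ℂ) (gs n F x) * w x) • gs n F) →
        Module.finrank ℂ (LinearMap.range ρG) ≤ 2 ^ n - n := by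
  classical
  set V : Submodule ℂ ((Fin n → Fin 2) → ℂ) := Submodule.span ℂ (RGS.SG n) with hVdef
  have hdimV : Module.finrank ℂ V = 2 ^ n - n := by
    rw [hVdef, RGS.span_eq, RGS.dim_span_chi]
  have hW : Module.finrank ℂ ((Fin n → Fin 2) → ℂ) = 2 ^ n := by
    rw [Module.finrank_pi]
    simp
  -- the dualizing map
  let ι : ((Fin n → Fin 2) → ℂ) →ₗ[ℂ] Module.Dual ℂ ((Fin n → Fin 2) → ℂ) :=
    LinearMap.mk₂ ℂ (fun w v => ∑ x, w x * v x)
      (fun w w' v => by simp [add_mul, Finset.sum_add_distrib])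
      (fun c w v => by simp [Finset.mul_sum, mul_assoc])
      (fun w v v' => by simp [mul_add, Finset.sum_add_distrib])
      (fun c w v => by simp [Finset.mul_sum]; exact Finset.sum_congr rfl fun x _ => by ring)
  have hι : ∀ w v : (Fin n → Fin 2) → ℂ, ι w v = ∑ x, w x * v x := fun w v => rfl
  have hinj : Function.Injective ι := by
    intro w w' h
    funext y
    have h1 := congrArg (fun φ => φ (Pi.single y 1)) h
    simpa [hι, Pi.single_apply, mul_ite] using h1
  have hsurj : Function.Surjective ι :=
    (LinearMap.injective_iff_surjective_of_finrank_eq_finrank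
      (Subspace.dual_finrank_eq).symm).mp hinj
  let e : ((Fin n → Fin 2) → ℂ) ≃ₗ[ℂ] Module.Dual ℂ ((Fin n → Fin 2) → ℂ) :=
    LinearEquiv.ofBijective ι ⟨hinj, hsurj⟩
  have he : ∀ w v : (Fin n → Fin 2) → ℂ, e w v = ∑ x, w x * v x := fun w v => rfl
  -- kernel characterization
  have hker : LinearMap.ker ρK = (V.dualAnnihilator).comap (e : _ →ₗ[ℂ] _) := by
    ext w
    simp only [LinearMap.mem_ker, Submodule.mem_comap, Submodule.mem_dualAnnihilator,
      LinearEquiv.coe_coe]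
    constructor
    · intro h0
      rw [hρK w] at h0
      set c : Finset (Sym2 (Fin n)) → ℝ :=
        fun F => p ^ F.card * (1 - p) ^ ((completeEdges n).card - F.card) with hcdef
      set a : Finset (Sym2 (Fin n)) → ℂ :=
        fun F => ∑ x, (starRingEnd ℂ) (gs n F x) * w x with hadef
      have h0' : ∑ F ∈ (completeEdges n).powerset, ((c F : ℂ) * a F) • gs n F = 0 := h0
      have hpt : ∀ x, ∑ F ∈ (completeEdges n).powerset,
          ((c F : ℂ) * a F) * gs n F x = 0 := by
        intro x
        have := congrFun h0' x
        simpa using this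
      have hconj : ∀ F, (starRingEnd ℂ) (a F) = ∑ x, (starRingEnd ℂ) (w x) * gs n F x := by
        intro F
        rw [hadef, map_sum]
        refine Finset.sum_congr rfl fun x _ => ?_
        rw [map_mul, Complex.conj_conj]
        exact mul_comm _ _
      have hz : ∑ F ∈ (completeEdges n).powerset,
          ((c F : ℂ) * (a F * (starRingEnd ℂ) (a F))) = 0 := by
        calc ∑ F ∈ (completeEdges n).powerset, ((c F : ℂ) * (a F * (starRingEnd ℂ) (a F)))
            = ∑ F ∈ (completeEdges n).powerset,
                ∑ x, (starRingEnd ℂ) (w x) * (((c F : ℂ) * a F) * gs n F x) := by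
              refine Finset.sum_congr rfl fun F _ => ?_
              rw [show (c F : ℂ) * (a F * (starRingEnd ℂ) (a F))
                  = ((c F : ℂ) * a F) * (starRingEnd ℂ) (a F) from by ring,
                hconj F, Finset.mul_sum]
              exact Finset.sum_congr rfl fun x _ => by ring
          _ = ∑ x, ∑ F ∈ (completeEdges n).powerset,
                (starRingEnd ℂ) (w x) * (((c F : ℂ) * a F) * gs n F x) := Finset.sum_comm
          _ = ∑ x : Fin n → Fin 2, (starRingEnd ℂ) (w x) *
                ∑ F ∈ (completeEdges n).powerset, ((c F : ℂ) * a F) * gs n F x :=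
              Finset.sum_congr rfl fun x _ => (Finset.mul_sum _ _ _).symm
          _ = 0 := Finset.sum_eq_zero fun x _ => by rw [hpt x, mul_zero]
      have hr : ∑ F ∈ (completeEdges n).powerset, c F * Complex.normSq (a F) = 0 := by
        have h4 := hz
        simp only [Complex.mul_conj] at h4
        exact_mod_cast h4
      have ha0 : ∀ F ∈ (completeEdges n).powerset, a F = 0 := by
        intro F hF
        have hcpos : 0 < c F := mul_pos (pow_pos hp0 _) (pow_pos (by linarith) _)
        have hnn : ∀ F ∈ (completeEdges n).powerset, 0 ≤ c F * Complex.normSq (a F) :=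
          fun F _ => mul_nonneg (le_of_lt (mul_pos (pow_pos hp0 _)
            (pow_pos (by linarith) _))) (Complex.normSq_nonneg _)
        have h00 := (Finset.sum_eq_zero_iff_of_nonneg hnn).mp hr F hF
        have h01 := (mul_eq_zero.mp h00).resolve_left (ne_of_gt hcpos)
        exact Complex.normSq_eq_zero.mp h01
      intro v hv
      have hsub : RGS.SG n ⊆ ↑(LinearMap.ker (e w)) := by
        rintro f ⟨F, hF, rfl⟩
        simp only [SetLike.mem_coe, LinearMap.mem_ker]
        rw [he]
        have h5 := ha0 F (Finset.mem_powerset.mpr hF)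
        rw [hadef] at h5
        rw [← h5]
        exact Finset.sum_congr rfl fun x _ => by rw [RGS.gs_conj, mul_comm]
      exact Submodule.span_le.mpr hsub hv
    · intro h
      rw [hρK w]
      refine Finset.sum_eq_zero fun F hF => ?_
      have hv : gs n F ∈ V := Submodule.subset_span ⟨F, Finset.mem_powerset.mp hF, rfl⟩
      have h1 := h (gs n F) hv
      rw [he] at h1
      have h2 : (∑ x, (starRingEnd ℂ) (gs n F x) * w x) = 0 := by
        rw [← h1]
        exact Finset.sum_congr rfl fun x _ => by rw [RGS.gs_conj, mul_comm]
      rw [h2, mul_zero, zero_smul]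
  -- dimension bookkeeping
  have hkerdim : Module.finrank ℂ (LinearMap.ker ρK) + Module.finrank ℂ V = 2 ^ n := by
    rw [hker, Submodule.comap_equiv_eq_map_symm, LinearEquiv.finrank_map_eq]
    have h := (LinearEquiv.finrank_eq (Subspace.quotEquivAnnihilator V)).symm
    rw [h, Submodule.finrank_quotient_add_finrank, hW]
  have hrn := LinearMap.finrank_range_add_finrank_ker ρK
  rw [hW] at hrn
  have hn2 : n < 2 ^ n := Nat.lt_two_pow_self
  constructor
  · omega
  · intro E hE ρG hρG
    have hle : LinearMap.range ρG ≤ V := by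
      rintro _ ⟨w, rfl⟩
      rw [hρG w]
      exact Submodule.sum_mem _ fun F hF => Submodule.smul_mem _ _
        (Submodule.subset_span ⟨F, (Finset.mem_powerset.mp hF).trans hE, rfl⟩)
    calc Module.finrank ℂ (LinearMap.range ρG) ≤ Module.finrank ℂ V :=
          Submodule.finrank_mono hle
      _ = 2 ^ n - n := hdimV
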